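/- Let t ≥ 2 be an even integer, n, k, d ≥ 1 integers, c ∈ ℕ, and S ⊆ [n] with |S| ≥ n/k^c. Suppose the numbers z_r^{i,j} ∈ {0,1} (for r ∈ [n], i,j ∈ [k]) satisfy Σ_{i,j=1}^k z_r^{i,j} = 1 for every r, and the vectors v_1, …, v_n ∈ ℝ^d satisfy z_r^{i,j} · z_s^{i,j} · (v_r − v_s) = 0 for all r, s ∈ [n] and i, j ∈ [k], and for every u ∈ ℝ^d, (1/n) Σ_{r=1}^n ⟨v_r, u⟩^t ≤ 2·(4t)^{t/2}·‖u‖^t. Then (1/|S|) Σ_{r ∈ S} ‖v_r‖^2 ≤ 8 · k^{(4+2c)/t} · t. -/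

import Mathlib

open Finset

/-- Hölder-type bound: sum of `θ`-th powers is at most `card^(1-θ) * (sum)^θ` for `θ ∈ [0,1]`. -/
lemma aux_sum_rpow_le {ι : Type*} [Fintype ι] (g : ι → ℝ) (hg : ∀ i, 0 ≤ g i)
    {θ : ℝ} (hθ0 : 0 ≤ θ) (hθ1 : θ ≤ 1) :
    ∑ i, g i ^ θ ≤ (Fintype.card ι : ℝ) ^ (1 - θ) * (∑ i, g i) ^ θ := by
  rcases eq_or_lt_of_le hθ0 with h0 | h0
  · simp [← h0]
  rcases eq_or_lt_of_le hθ1 with h1 | h1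
  · simp only [h1, Real.rpow_one, sub_self, Real.rpow_zero, one_mul]
    exact le_refl _
  -- 0 < θ < 1 : use Hölder with p = 1/(1-θ), q = 1/θ
  have hpq : Real.HolderConjugate (1 / (1 - θ)) (1 / θ) := by
    constructor
    · rw [one_div, one_div, inv_inv, inv_inv, inv_one]; ring
    · exact one_div_pos.2 (by linarith)
    · exact one_div_pos.2 h0
  have H := Real.inner_le_Lp_mul_Lq (s := Finset.univ) (f := fun _ => (1 : ℝ))
    (g := fun i => g i ^ θ) hpq
  simp only [one_mul, abs_one, Real.one_rpow, Finset.sum_const, Finset.card_univ,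
    nsmul_eq_mul, mul_one, one_div_one_div] at H
  have habs : ∀ i, |g i ^ θ| ^ (1 / θ) = g i := by
    intro i
    rw [abs_of_nonneg (Real.rpow_nonneg (hg i) θ), ← Real.rpow_mul (hg i),
      mul_one_div, div_self (ne_of_gt h0), Real.rpow_one]
  calc ∑ i, g i ^ θ
      ≤ (Fintype.card ι : ℝ) ^ (1 - θ) * (∑ i, |g i ^ θ| ^ (1 / θ)) ^ θ := H
    _ = (Fintype.card ι : ℝ) ^ (1 - θ) * (∑ i, g i) ^ θ := by
        congr 2
        exact Finset.sum_congr rfl fun i _ => habs i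

theorem stmt_1
    (t n k d : ℕ) (ht2 : 2 ≤ t) (hte : Even t)
    (hn : 0 < n) (hk : 0 < k) (hd : 0 < d) (c : ℕ)
    (S : Finset (Fin n)) (hS : (n : ℝ) / (k : ℝ) ^ c ≤ (S.card : ℝ))
    (z : Fin n → Fin k → Fin k → ℝ)
    (hz01 : ∀ r i j, z r i j = 0 ∨ z r i j = 1)
    (hzsum : ∀ r, ∑ i, ∑ j, z r i j = 1)
    (v : Fin n → EuclideanSpace ℝ (Fin d))
    (hconst : ∀ r s i j, (z r i j * z s i j) • (v r - v s) = 0)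
    (hmom : ∀ u : EuclideanSpace ℝ (Fin d),
      (1 / (n : ℝ)) * ∑ r, (inner ℝ (v r) u : ℝ) ^ t
        ≤ 2 * ((4 * t : ℝ)) ^ (t / 2) * ‖u‖ ^ t) :
    (1 / (S.card : ℝ)) * ∑ r ∈ S, ‖v r‖ ^ 2
      ≤ 8 * (k : ℝ) ^ (((4 : ℝ) + 2 * c) / (t : ℝ)) * t := by
  classical
  have hT2 : (2 : ℝ) ≤ (t : ℝ) := by exact_mod_cast ht2
  have hTpos : (0 : ℝ) < (t : ℝ) := by linarith
  have hTne : (t : ℝ) ≠ 0 := ne_of_gt hTpos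
  have htne : t ≠ 0 := by omega
  set e : ℝ := 2 / (t : ℝ) with he
  have he0 : 0 ≤ e := by positivity
  have he1 : e ≤ 1 := by rw [he, div_le_one hTpos]; exact hT2
  -- each sample has a class
  have hex : ∀ r, ∃ p : Fin k × Fin k, z r p.1 p.2 = 1 := by
    intro r
    by_contra h
    push_neg at h
    have h0 : ∑ i, ∑ j, z r i j = 0 := by
      refine Finset.sum_eq_zero fun i _ => Finset.sum_eq_zero fun j _ => ?_
      rcases hz01 r i j with h' | h'
      · exact h'
      · exact absurd h' (h (i, j))
    rw [hzsum r] at h0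
    norm_num at h0
  choose f hf using hex
  have hsame : ∀ r s, f r = f s → v r = v s := by
    intro r s h
    have hc := hconst r s (f r).1 (f r).2
    have h1 : z r (f r).1 (f r).2 = 1 := hf r
    have h2 : z s (f r).1 (f r).2 = 1 := by rw [h]; exact hf s
    rw [h1, h2, one_mul, one_smul, sub_eq_zero] at hc
    exact hc
  set m : Fin k × Fin k → ℕ := fun p => (S.filter fun r => f r = p).card with hm
  set A : ℝ := 2 * ((4 * t : ℝ)) ^ (t / 2) * n with hA
  have hA0 : (0 : ℝ) ≤ A := by positivity
  -- key per-sample inequality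
  have hkey : ∀ r ∈ S, (m (f r) : ℝ) * ‖v r‖ ^ t ≤ A := by
    intro r hr
    have hlow : (m (f r) : ℝ) * (‖v r‖ ^ 2) ^ t ≤ ∑ s, (inner ℝ (v s) (v r) : ℝ) ^ t := by
      have heq : ∀ s ∈ S.filter (fun s => f s = f r),
          (inner ℝ (v s) (v r) : ℝ) ^ t = (‖v r‖ ^ 2) ^ t := by
        intro s hs
        rw [hsame s r (Finset.mem_filter.1 hs).2, real_inner_self_eq_norm_sq]
      calc (m (f r) : ℝ) * (‖v r‖ ^ 2) ^ t
          = ∑ s ∈ S.filter (fun s => f s = f r), (inner ℝ (v s) (v r) : ℝ) ^ t := by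
            rw [Finset.sum_congr rfl heq, Finset.sum_const, nsmul_eq_mul]
        _ ≤ ∑ s, (inner ℝ (v s) (v r) : ℝ) ^ t :=
            Finset.sum_le_sum_of_subset_of_nonneg (Finset.subset_univ _)
              (fun s _ _ => hte.pow_nonneg _)
    have hnp : (0 : ℝ) < n := by exact_mod_cast hn
    have hup : ∑ s, (inner ℝ (v s) (v r) : ℝ) ^ t
        ≤ (n : ℝ) * (2 * ((4 * t : ℝ)) ^ (t / 2) * ‖v r‖ ^ t) := by
      have := hmom (v r)
      rw [one_div, inv_mul_le_iff₀ hnp] at this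
      exact this
    rcases eq_or_ne ‖v r‖ 0 with h0 | h0
    · rw [h0, zero_pow htne, mul_zero]; exact hA0
    · have hpos : 0 < ‖v r‖ ^ t := pow_pos (lt_of_le_of_ne (norm_nonneg _) (Ne.symm h0)) t
      have hmain : (m (f r) : ℝ) * ‖v r‖ ^ t * ‖v r‖ ^ t ≤ A * ‖v r‖ ^ t := by
        calc (m (f r) : ℝ) * ‖v r‖ ^ t * ‖v r‖ ^ t
            = (m (f r) : ℝ) * (‖v r‖ ^ 2) ^ t := by ring
          _ ≤ (n : ℝ) * (2 * ((4 * t : ℝ)) ^ (t / 2) * ‖v r‖ ^ t) := le_trans hlow hup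
          _ = A * ‖v r‖ ^ t := by rw [hA]; ring
      exact le_of_mul_le_mul_right hmain hpos
  -- pointwise rpow bound
  have hVr : ∀ r ∈ S, ‖v r‖ ^ 2 ≤ (A / (m (f r) : ℝ)) ^ e := by
    intro r hr
    have hm1 : 0 < m (f r) :=
      Finset.card_pos.2 ⟨r, Finset.mem_filter.2 ⟨hr, rfl⟩⟩
    have hmp : (0 : ℝ) < (m (f r) : ℝ) := by exact_mod_cast hm1
    have h1 : ‖v r‖ ^ t ≤ A / (m (f r) : ℝ) := by
      rw [le_div_iff₀ hmp, mul_comm]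
      exact hkey r hr
    calc ‖v r‖ ^ 2 = ‖v r‖ ^ ((2 : ℕ) : ℝ) := (Real.rpow_natCast _ 2).symm
      _ = (‖v r‖ ^ t) ^ e := by
          rw [← Real.rpow_natCast (‖v r‖) t, ← Real.rpow_mul (norm_nonneg _)]
          congr 1
          rw [he]
          push_cast
          field_simp
      _ ≤ (A / (m (f r) : ℝ)) ^ e :=
          Real.rpow_le_rpow (by positivity) h1 he0
  -- sum over fibers
  have hfib : ∑ r ∈ S, ‖v r‖ ^ 2
      ≤ A ^ e * ∑ p : Fin k × Fin k, (m p : ℝ) ^ (1 - e) := by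
    calc ∑ r ∈ S, ‖v r‖ ^ 2 ≤ ∑ r ∈ S, (A / (m (f r) : ℝ)) ^ e :=
          Finset.sum_le_sum hVr
      _ = ∑ p : Fin k × Fin k, ∑ r ∈ S.filter (fun r => f r = p),
            (A / (m (f r) : ℝ)) ^ e :=
          (Finset.sum_fiberwise S f _).symm
      _ ≤ ∑ p : Fin k × Fin k, A ^ e * (m p : ℝ) ^ (1 - e) := by
          refine Finset.sum_le_sum fun p _ => ?_
          have hval : ∑ r ∈ S.filter (fun r => f r = p), (A / (m (f r) : ℝ)) ^ e
              = (m p : ℝ) * (A / (m p : ℝ)) ^ e := by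
            rw [Finset.sum_congr rfl (fun r hr => by
              rw [(Finset.mem_filter.1 hr).2]), Finset.sum_const, nsmul_eq_mul]
          rw [hval]
          rcases Nat.eq_zero_or_pos (m p) with h0 | h0
          · rw [h0]
            simp only [Nat.cast_zero, zero_mul]
            positivity
          · have hmp : (0 : ℝ) < (m p : ℝ) := by exact_mod_cast h0
            refine le_of_eq ?_
            calc (m p : ℝ) * (A / (m p : ℝ)) ^ e
                = A ^ e * ((m p : ℝ) / (m p : ℝ) ^ e) := by
                  rw [Real.div_rpow hA0 hmp.le]; ring
              _ = A ^ e * (m p : ℝ) ^ (1 - e) := by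
                  rw [Real.rpow_sub hmp, Real.rpow_one]
      _ = A ^ e * ∑ p : Fin k × Fin k, (m p : ℝ) ^ (1 - e) :=
          (Finset.mul_sum _ _ _).symm
  -- Hölder step
  have hcard : ∑ p : Fin k × Fin k, (m p : ℝ) = (S.card : ℝ) := by
    rw [← Nat.cast_sum]
    norm_cast
    exact (Finset.card_eq_sum_card_fiberwise (f := f) (fun r _ => Finset.mem_univ (f r))).symm
  have hhold : ∑ p : Fin k × Fin k, (m p : ℝ) ^ (1 - e)
      ≤ ((k : ℝ) * k) ^ e * (S.card : ℝ) ^ (1 - e) := by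
    have H := aux_sum_rpow_le (θ := 1 - e) (fun p : Fin k × Fin k => (m p : ℝ))
      (fun p => Nat.cast_nonneg _) (by linarith) (by linarith)
    rw [hcard] at H
    have hc2 : (Fintype.card (Fin k × Fin k) : ℝ) = (k : ℝ) * k := by
      simp [Fintype.card_prod]
    rw [hc2] at H
    have hee : (1 : ℝ) - (1 - e) = e := by ring
    rw [hee] at H
    exact H
  -- size of S
  have hs0 : (0 : ℝ) < (S.card : ℝ) :=
    lt_of_lt_of_le (by positivity) hS
  have hns : (n : ℝ) / (S.card : ℝ) ≤ (k : ℝ) ^ c := by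
    rw [div_le_iff₀ hs0]
    have h := (div_le_iff₀ (by positivity : (0 : ℝ) < (k : ℝ) ^ c)).1 hS
    linarith
  -- assemble
  have hstep : (1 / (S.card : ℝ)) * ∑ r ∈ S, ‖v r‖ ^ 2
      ≤ A ^ e * ((k : ℝ) * k) ^ e / (S.card : ℝ) ^ e := by
    have h1 : ∑ r ∈ S, ‖v r‖ ^ 2
        ≤ A ^ e * (((k : ℝ) * k) ^ e * ((S.card : ℝ) / (S.card : ℝ) ^ e)) := by
      refine le_trans hfib ?_
      have hsub : (S.card : ℝ) ^ (1 - e) = (S.card : ℝ) / (S.card : ℝ) ^ e := by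
        rw [Real.rpow_sub hs0, Real.rpow_one]
      refine mul_le_mul_of_nonneg_left ?_ (Real.rpow_nonneg hA0 _)
      rw [← hsub]
      exact hhold
    have h2 := mul_le_mul_of_nonneg_left h1 (le_of_lt (by positivity : (0:ℝ) < 1 / (S.card : ℝ)))
    refine le_trans h2 (le_of_eq ?_)
    field_simp
  refine le_trans hstep ?_
  -- final computation
  have hhalf : ((t / 2 : ℕ) : ℝ) * e = 1 := by
    have hdvd : ((t / 2 : ℕ) : ℝ) * 2 = (t : ℝ) := by
      exact_mod_cast Nat.div_mul_cancel hte.two_dvd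
    rw [he, mul_div_assoc', hdvd, div_self hTne]
  have hAe : A ^ e = 2 ^ e * (4 * (t : ℝ)) * (n : ℝ) ^ e := by
    rw [hA, Real.mul_rpow (by positivity) (Nat.cast_nonneg n),
      Real.mul_rpow (by norm_num) (by positivity),
      ← Real.rpow_natCast ((4 * (t : ℝ))) (t / 2), ← Real.rpow_mul (by positivity),
      hhalf, Real.rpow_one]
  have hKE : ((k : ℝ) * k) ^ e * ((k : ℝ) ^ c) ^ e
      = (k : ℝ) ^ (((4 : ℝ) + 2 * c) / (t : ℝ)) := by
    rw [← Real.mul_rpow (by positivity) (by positivity),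
      show (k : ℝ) * k * (k : ℝ) ^ c = (k : ℝ) ^ (c + 2) by ring,
      ← Real.rpow_natCast (k : ℝ) (c + 2), ← Real.rpow_mul (Nat.cast_nonneg k)]
    congr 1
    rw [he]
    push_cast
    field_simp
    ring
  have h2e : (2 : ℝ) ^ e ≤ 2 := by
    calc (2 : ℝ) ^ e ≤ (2 : ℝ) ^ (1 : ℝ) :=
          Real.rpow_le_rpow_of_exponent_le (by norm_num) he1
      _ = 2 := Real.rpow_one 2
  calc A ^ e * ((k : ℝ) * k) ^ e / (S.card : ℝ) ^ e
      = (2 ^ e * (4 * (t : ℝ))) * (((k : ℝ) * k) ^ e * ((n : ℝ) / (S.card : ℝ)) ^ e) := by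
        rw [hAe, Real.div_rpow (Nat.cast_nonneg n) (le_of_lt hs0)]
        ring
    _ ≤ (2 * (4 * (t : ℝ))) * (((k : ℝ) * k) ^ e * ((k : ℝ) ^ c) ^ e) := by
        refine mul_le_mul ?_ ?_ ?_ (by positivity)
        · exact mul_le_mul_of_nonneg_right h2e (by positivity)
        · refine mul_le_mul_of_nonneg_left ?_ (Real.rpow_nonneg (by positivity) _)
          exact Real.rpow_le_rpow (by positivity) hns he0
        · positivity
    _ = 8 * (k : ℝ) ^ (((4 : ℝ) + 2 * c) / (t : ℝ)) * t := by
        rw [hKE]; ring
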